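/- Let (X,r) be a nondegenerate solution satisfying lri. For τ ∈ Sym(X), τ is an automorphism of (X,r) (i.e. (τ×τ)∘r = r∘(τ×τ)) if and only if τ∘λ_x∘τ^{-1} = λ_{τ(x)} for all x ∈ X. Consequently the automorphism group Aut(X,r) is contained in the normalizer in Sym(X) of the group G(X,r) generated by {λ_x : x ∈ X}. -/

import Mathlib

/-- The quadratic map `r(x,y) = (λ_x(y), ρ_y(x))`. -/
def ybMap {X : Type*} (lam rho : X → X → X) : X × X → X × X :=
  fun p => (lam p.1 p.2, rho p.2 p.1)

/-- `r¹² = r × id` on `X × X × X`. -/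
def ybR12 {X : Type*} (lam rho : X → X → X) : X × X × X → X × X × X :=
  fun p => (lam p.1 p.2.1, rho p.2.1 p.1, p.2.2)

/-- `r²³ = id × r` on `X × X × X`. -/
def ybR23 {X : Type*} (lam rho : X → X → X) : X × X × X → X × X × X :=
  fun p => (p.1, lam p.2.1 p.2.2, rho p.2.2 p.2.1)

/-- The braid (Yang–Baxter) relation `r¹²r²³r¹² = r²³r¹²r²³`. -/
def YbBraided {X : Type*} (lam rho : X → X → X) : Prop :=
  ybR12 lam rho ∘ ybR23 lam rho ∘ ybR12 lam rho
    = ybR23 lam rho ∘ ybR12 lam rho ∘ ybR23 lam rho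

/-- `r` is involutive: `r ∘ r = id`. -/
def YbInvolutive {X : Type*} (lam rho : X → X → X) : Prop :=
  ∀ p, ybMap lam rho (ybMap lam rho p) = p

/-- Nondegeneracy: all `λ_x` and `ρ_x` are bijective. -/
def YbNondeg {X : Type*} (lam rho : X → X → X) : Prop :=
  (∀ x, Function.Bijective (lam x)) ∧ (∀ x, Function.Bijective (rho x))

/-- Condition lri: `ρ_x(λ_x(y)) = y = λ_x(ρ_x(y))`. -/
def YbLri {X : Type*} (lam rho : X → X → X) : Prop :=
  ∀ x y, rho x (lam x y) = y ∧ lam x (rho x y) = y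

/-- Square-free: `r(x,x) = (x,x)`. -/
def YbSquareFree {X : Type*} (lam rho : X → X → X) : Prop :=
  ∀ x, lam x x = x ∧ rho x x = x

/-- for a nondegenerate solution with lri (encoded by `λ : X → Perm X`,
`ρ_y = λ_y⁻¹`), a permutation `τ` is an automorphism iff `τ λ_x τ⁻¹ = λ_{τ(x)}` for all `x`;
consequently every automorphism lies in the normalizer of `G(X,r) = ⟨λ_x⟩` in `Sym(X)`. -/
theorem aut_iff_conj_and_aut_le_normalizer {X : Type*} (lam : X → Equiv.Perm X)
    (hbr : YbBraided (fun x y => lam x y) (fun y x => (lam y)⁻¹ x)) :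
    (∀ τ : Equiv.Perm X,
      ((fun p : X × X => (τ p.1, τ p.2)) ∘ ybMap (fun x y => lam x y) (fun y x => (lam y)⁻¹ x)
          = ybMap (fun x y => lam x y) (fun y x => (lam y)⁻¹ x)
            ∘ (fun p : X × X => (τ p.1, τ p.2))) ↔
        (∀ x : X, τ * lam x * τ⁻¹ = lam (τ x))) ∧
    (∀ τ : Equiv.Perm X,
      ((fun p : X × X => (τ p.1, τ p.2)) ∘ ybMap (fun x y => lam x y) (fun y x => (lam y)⁻¹ x)
          = ybMap (fun x y => lam x y) (fun y x => (lam y)⁻¹ x)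
            ∘ (fun p : X × X => (τ p.1, τ p.2))) →
        τ ∈ Subgroup.normalizer (Subgroup.closure (Set.range lam) : Set (Equiv.Perm X))) := by
  have key : ∀ τ : Equiv.Perm X,
      ((fun p : X × X => (τ p.1, τ p.2)) ∘ ybMap (fun x y => lam x y) (fun y x => (lam y)⁻¹ x)
          = ybMap (fun x y => lam x y) (fun y x => (lam y)⁻¹ x)
            ∘ (fun p : X × X => (τ p.1, τ p.2))) ↔
        (∀ x : X, τ * lam x * τ⁻¹ = lam (τ x)) := by
    intro τ
    constructor
    · intro h x
      ext y
      have := congrFun h (x, τ⁻¹ y)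
      simp only [ybMap, Function.comp_apply, Prod.mk.injEq] at this
      rw [show τ (τ⁻¹ y) = y from τ.apply_symm_apply y] at this
      simpa [Equiv.Perm.mul_apply] using this.1
    · intro h
      funext p
      have h1 := h p.1
      have h2 := h p.2
      simp only [ybMap, Function.comp_apply, Prod.mk.injEq]
      constructor
      · have h1' : τ * lam p.1 = lam (τ p.1) * τ := by rw [← h1]; group
        simpa [Equiv.Perm.mul_apply] using Equiv.ext_iff.1 h1' p.2
      · have : (lam (τ p.2))⁻¹ = τ * (lam p.2)⁻¹ * τ⁻¹ := by
          rw [← h2]; group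
        rw [this]
        simp [Equiv.Perm.mul_apply]
  refine ⟨key, fun τ hτ => ?_⟩
  have hc := (key τ).1 hτ
  rw [Subgroup.mem_normalizer_iff]
  intro g
  constructor
  · intro hg
    refine Subgroup.closure_induction (fun a ha => by
      obtain ⟨x, rfl⟩ := ha
      rw [hc x]
      exact Subgroup.subset_closure ⟨τ x, rfl⟩) (by simpa using one_mem _)
      (fun a b _ _ ha hb => by
      have : τ * (a * b) * τ⁻¹ = (τ * a * τ⁻¹) * (τ * b * τ⁻¹) := by group
      rw [this]; exact mul_mem ha hb) (fun a _ ha => by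
      have : τ * a⁻¹ * τ⁻¹ = (τ * a * τ⁻¹)⁻¹ := by group
      rw [this]; exact inv_mem ha) hg
  · intro hg
    have hg' : τ⁻¹ * (τ * g * τ⁻¹) * τ ∈ Subgroup.closure (Set.range lam) → g ∈ Subgroup.closure (Set.range lam) := by
      intro h; convert h using 1; group
    apply hg'
    refine Subgroup.closure_induction (fun a ha => by
      obtain ⟨x, rfl⟩ := ha
      have hx : τ⁻¹ * lam x * τ = lam (τ⁻¹ x) := by
        have := hc (τ⁻¹ x)
        rw [show τ (τ⁻¹ x) = x from τ.apply_symm_apply x] at this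
        rw [← this]; group
      rw [hx]
      exact Subgroup.subset_closure ⟨τ⁻¹ x, rfl⟩) (by simpa using one_mem _)
      (fun a b _ _ ha hb => by
      have : τ⁻¹ * (a * b) * τ = (τ⁻¹ * a * τ) * (τ⁻¹ * b * τ) := by group
      rw [this]; exact mul_mem ha hb) (fun a _ ha => by
      have : τ⁻¹ * a⁻¹ * τ = (τ⁻¹ * a * τ)⁻¹ := by group
      rw [this]; exact inv_mem ha) hg
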